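/- Let k be an algebraically closed field of characteristic 3 and c ∈ k. The quartic polynomial F = x2(x0^3 − x0x2^2) + x1^4 + c·x1^2x2^2 is invariant under every substitution of the form (x0,x1,x2) ↦ (x0 + λx1 + μx2, x1 − λ^3x2, x2) with λ, μ ∈ k satisfying λ^9 − cλ^3 + λ = 0 and μ^3 − μ + λ^12 + cλ^6 = 0, and these substitutions form a group of order 27. -/

import Mathlib

open MvPolynomial

/-- In characteristic 3, `x2(x0^3 - x0x2^2) + x1^4 + c x1^2 x2^2` is invariant
under every substitution `(x0,x1,x2) ↦ (x0 + λx1 + μx2, x1 - λ^3 x2, x2)` with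
`λ^9 - cλ^3 + λ = 0` and `μ^3 - μ + λ^12 + cλ^6 = 0`, and there are exactly `27` such
substitutions. -/
theorem stmt_6 (k : Type*) [Field k] [IsAlgClosed k] [CharP k 3] (c : k)
    (F : MvPolynomial (Fin 3) k)
    (hF : F = X 2 * (X 0 ^ 3 - X 0 * X 2 ^ 2) + X 1 ^ 4 + C c * X 1 ^ 2 * X 2 ^ 2) :
    (∀ l m : k, l ^ 9 - c * l ^ 3 + l = 0 → m ^ 3 - m + l ^ 12 + c * l ^ 6 = 0 →
      aeval ![X 0 + C l * X 1 + C m * X 2, X 1 - C (l ^ 3) * X 2, X 2] F = F) ∧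
    Set.ncard {lm : k × k | lm.1 ^ 9 - c * lm.1 ^ 3 + lm.1 = 0 ∧
      lm.2 ^ 3 - lm.2 + lm.1 ^ 12 + c * lm.1 ^ 6 = 0} = 27 := by
  classical
  have h3k : (3 : k) = 0 := by simpa using CharP.cast_eq_zero k 3
  constructor
  · intro l m h1 h2
    have hc1 : (C l : MvPolynomial (Fin 3) k) ^ 9 - C c * C l ^ 3 + C l = 0 := by
      have : (C (l ^ 9 - c * l ^ 3 + l) : MvPolynomial (Fin 3) k) = 0 := by rw [h1, map_zero]
      simpa using this
    have hc2 : (C m : MvPolynomial (Fin 3) k) ^ 3 - C m + C l ^ 12 + C c * C l ^ 6 = 0 := by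
      have : (C (m ^ 3 - m + l ^ 12 + c * l ^ 6) : MvPolynomial (Fin 3) k) = 0 := by
        rw [h2, map_zero]
      simpa using this
    have h3 : (3 : MvPolynomial (Fin 3) k) = 0 := by
      rw [← map_ofNat (C : k →+* MvPolynomial (Fin 3) k) 3, h3k, map_zero]
    rw [hF]
    simp only [map_add, map_mul, map_sub, map_pow, aeval_X, aeval_C,
      MvPolynomial.algebraMap_eq, Matrix.cons_val_zero, Matrix.cons_val_one, Matrix.head_cons,
      Matrix.cons_val_two, Matrix.tail_cons, map_pow]
    linear_combination (-(X 1 * X 2 ^ 3) : MvPolynomial (Fin 3) k) * hc1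
      + (X 2 ^ 4 : MvPolynomial (Fin 3) k) * hc2
      + (C m * X 0 ^ 2 * X 2 ^ 2 + C m ^ 2 * X 0 * X 2 ^ 3 + C l * X 0 ^ 2 * X 1 * X 2
        + 2 * C l * C m * X 0 * X 1 * X 2 ^ 2 + C l * C m ^ 2 * X 1 * X 2 ^ 3
        + C l ^ 2 * X 0 * X 1 ^ 2 * X 2 + C l ^ 2 * C m * X 1 ^ 2 * X 2 ^ 2
        - C l ^ 3 * X 1 ^ 3 * X 2 - C l ^ 3 * C c * X 1 * X 2 ^ 3
        + 2 * C l ^ 6 * X 1 ^ 2 * X 2 ^ 2 - C l ^ 9 * X 1 * X 2 ^ 3) * h3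
  · set P : Polynomial k := Polynomial.X ^ 9 - Polynomial.C c * Polynomial.X ^ 3 + Polynomial.X
      with hP
    have h9k : (9 : k) = 0 := by linear_combination (3 : k) * h3k
    have hPdeg : P.natDegree = 9 := by rw [hP]; compute_degree!
    have hP0 : P ≠ 0 := fun h => by simp [h] at hPdeg
    have hPder : Polynomial.derivative P = 1 := by
      rw [hP]
      simp [Polynomial.derivative_X_pow, h9k, h3k]
      rw [← Polynomial.C_1, ← Polynomial.C_add, show (8:k) + 1 = 9 by norm_num, h9k, ← Polynomial.C_add,
        show (2:k) + 1 = 3 by norm_num, h3k]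
      simp
    have hPsep : P.Separable := by rw [Polynomial.Separable, hPder]; exact isCoprime_one_right
    have hPnodup : P.roots.Nodup := Polynomial.nodup_roots hPsep
    have hPcard : P.roots.toFinset.card = 9 := by
      rw [Multiset.toFinset_card_of_nodup hPnodup,
        (Polynomial.splits_iff_card_roots).mp (IsAlgClosed.splits P)]
      exact hPdeg
    set Q : k → Polynomial k := fun a =>
      Polynomial.X ^ 3 - Polynomial.X + Polynomial.C a with hQ
    have hQdeg : ∀ a, (Q a).natDegree = 3 := by
      intro a; simp only [hQ]; compute_degree!
    have hQ0 : ∀ a, Q a ≠ 0 := fun a h => by simpa [h] using hQdeg a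
    have hQder : ∀ a, Polynomial.derivative (Q a) = -1 := by
      intro a
      simp [hQ, Polynomial.derivative_X_pow, h3k]
      rw [← Polynomial.C_1, ← Polynomial.C_add, show (2:k) + 1 = 3 by norm_num, h3k, map_zero]
    have hQsep : ∀ a, (Q a).Separable := by
      intro a
      rw [Polynomial.Separable, hQder a]
      exact (isCoprime_one_right (x := Q a)).neg_right
    have hQcard : ∀ a, (Q a).roots.toFinset.card = 3 := by
      intro a
      rw [Multiset.toFinset_card_of_nodup (Polynomial.nodup_roots (hQsep a)),
        (Polynomial.splits_iff_card_roots).mp (IsAlgClosed.splits (Q a))]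
      exact hQdeg a
    set T : Finset (k × k) := P.roots.toFinset.biUnion
      (fun l => ((Q (l ^ 12 + c * l ^ 6)).roots.toFinset).image (fun m => (l, m))) with hT
    have hset : {lm : k × k | lm.1 ^ 9 - c * lm.1 ^ 3 + lm.1 = 0 ∧
        lm.2 ^ 3 - lm.2 + lm.1 ^ 12 + c * lm.1 ^ 6 = 0} = ↑T := by
      ext ⟨l, m⟩
      simp only [hT, Set.mem_setOf_eq, Finset.coe_biUnion, Set.mem_iUnion, Finset.mem_coe,
        Multiset.mem_toFinset, Finset.mem_image, Polynomial.mem_roots, hP0, hQ0,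
        ne_eq, not_false_eq_true, true_and, Prod.mk.injEq]
      constructor
      · rintro ⟨h1, h2⟩
        refine ⟨l, ?_, m, ?_, rfl, rfl⟩
        · simp [hP, Polynomial.IsRoot, h1]
        · simp only [hQ, Polynomial.IsRoot, Polynomial.eval_add, Polynomial.eval_sub,
            Polynomial.eval_pow, Polynomial.eval_X, Polynomial.eval_C]
          linear_combination h2
      · rintro ⟨a, ha, b, hb, rfl, rfl⟩
        constructor
        · simpa [hP, Polynomial.IsRoot] using ha
        · simp only [hQ, Polynomial.IsRoot, Polynomial.eval_add, Polynomial.eval_sub,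
            Polynomial.eval_pow, Polynomial.eval_X, Polynomial.eval_C] at hb
          linear_combination hb
    rw [hset, Set.ncard_coe_finset, hT, Finset.card_biUnion]
    · have hc : ∀ l ∈ P.roots.toFinset,
          (((Q (l ^ 12 + c * l ^ 6)).roots.toFinset).image (fun m => (l, m))).card = 3 := by
        intro l _
        rw [Finset.card_image_of_injective _ (fun a b h => (Prod.ext_iff.mp h).2)]
        exact hQcard _
      rw [Finset.sum_congr rfl hc, Finset.sum_const, hPcard]
      norm_num
    · intro a _ b _ hab
      simp only [Finset.disjoint_left, Finset.mem_image]
      rintro ⟨x, y⟩ ⟨u, -, hu⟩ ⟨v, -, hv⟩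
      exact hab ((congrArg Prod.fst hu).trans (congrArg Prod.fst hv).symm)
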